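/- Let $\gamma$ be a smooth curve in a pseudo-Riemannian manifold $M$ with velocity $X = \dot\gamma$ and $Y := \nabla_X X$, satisfying the circle equation $\nabla_X \nabla_X X = -\langle \nabla_X X, \nabla_X X\rangle \langle X,X\rangle X$ with initial conditions $\langle X,X\rangle = \pm 1$ and $\langle X,Y\rangle = 0$ at $t=0$. Then $\langle X,X\rangle$ is constant (i.e., $\gamma$ is a unit speed curve), $\langle X,Y\rangle = 0$ everywhere, and $\langle Y,Y\rangle$ is constant along $\gamma$. -/

import Mathlib

open Set

lemma gronwall_zero_fwd {f f' : ℝ → ℝ} {K T : ℝ}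
    (hf : ∀ t, HasDerivAt f (f' t) t) (h0 : f 0 = 0)
    (hb : ∀ t ∈ Set.Icc (0:ℝ) T, |f' t| ≤ K * |f t|)
    {t : ℝ} (ht : t ∈ Set.Icc (0:ℝ) T) : f t = 0 := by
  have key := norm_le_gronwallBound_of_norm_deriv_right_le
    (f := f) (f' := f') (δ := 0) (K := K) (ε := 0) (a := 0) (b := T)
    (fun s _ => (hf s).continuousAt.continuousWithinAt)
    (fun s _ => (hf s).hasDerivWithinAt) (by simp [h0])
    (fun s hs => by simpa using hb s (Ico_subset_Icc_self hs)) t ht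
  rw [gronwallBound_ε0_δ0] at key
  have : ‖f t‖ = 0 := le_antisymm key (norm_nonneg _)
  simpa using this

lemma gronwall_zero_all {f f' : ℝ → ℝ}
    (hf : ∀ t, HasDerivAt f (f' t) t) (h0 : f 0 = 0)
    (hb : ∀ T : ℝ, ∃ K, ∀ t, |t| ≤ T → |f' t| ≤ K * |f t|) :
    ∀ t, f t = 0 := by
  intro t
  rcases le_or_gt 0 t with htpos | htneg
  · obtain ⟨K, hK⟩ := hb t
    refine gronwall_zero_fwd hf h0 (fun s hs => hK s ?_) (by constructor <;> linarith)
    rw [abs_le]; exact ⟨by linarith [hs.1], hs.2⟩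
  · obtain ⟨K, hK⟩ := hb (-t)
    have hfneg : ∀ s, HasDerivAt (fun u => f (-u)) (-(f' (-s))) s := by
      intro s
      exact ((hf (-s)).comp s (hasDerivAt_neg s)).congr_deriv (by simp)
    have := gronwall_zero_fwd (f := fun u => f (-u)) (f' := fun u => -(f' (-u)))
      hfneg (by simpa using h0)
      (fun s hs => by
        rw [abs_neg]
        exact hK (-s) (by rw [abs_neg, abs_le]; exact ⟨by linarith [hs.1], hs.2⟩))
      (t := -t) (by constructor <;> linarith)
    simpa using this


/-- Circle equation lemma.  Along a curve in a pseudo-Riemannian manifold,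
let `X` be the velocity field, `Y = ∇_X X` and `Z = ∇_X ∇_X X`, expressed here
through the metric-compatibility of covariant differentiation along the curve
(hypotheses `hXX`, `hXY`, `hYY`).  If the circle equation
`∇_X ∇_X X = -⟨∇_X X, ∇_X X⟩ ⟨X,X⟩ X` holds, with `⟨X,X⟩(0) = ±1` and
`⟨X,Y⟩(0) = 0`, then `⟨X,X⟩` is constant (unit speed), `⟨X,Y⟩ = 0` everywhere,
and `⟨Y,Y⟩` is constant along the curve. -/
theorem circle_equation_invariants {V : Type*} [NormedAddCommGroup V]
    [NormedSpace ℝ V]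
    (B : LinearMap.BilinForm ℝ V)
    (hsymm : ∀ x y : V, B x y = B y x)
    (X Y Z : ℝ → V)
    (hXX : ∀ t : ℝ, HasDerivAt (fun s => B (X s) (X s))
      (B (Y t) (X t) + B (X t) (Y t)) t)
    (hXY : ∀ t : ℝ, HasDerivAt (fun s => B (X s) (Y s))
      (B (Y t) (Y t) + B (X t) (Z t)) t)
    (hYY : ∀ t : ℝ, HasDerivAt (fun s => B (Y s) (Y s))
      (B (Z t) (Y t) + B (Y t) (Z t)) t)
    (hcircle : ∀ t : ℝ, Z t = -(B (Y t) (Y t) * B (X t) (X t)) • X t)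
    (hinit0 : B (X 0) (X 0) = 1 ∨ B (X 0) (X 0) = -1)
    (hinit1 : B (X 0) (Y 0) = 0) :
    (∀ t : ℝ, B (X t) (X t) = B (X 0) (X 0)) ∧
    (∀ t : ℝ, B (X t) (Y t) = 0) ∧
    (∀ t : ℝ, B (Y t) (Y t) = B (Y 0) (Y 0)) := by
  set a : ℝ → ℝ := fun t => B (X t) (X t) with ha_def
  set b : ℝ → ℝ := fun t => B (X t) (Y t) with hb_def
  set c : ℝ → ℝ := fun t => B (Y t) (Y t) with hc_def
  set a0 : ℝ := B (X 0) (X 0) with ha0_def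
  have ha0sq : a0 ^ 2 = 1 := by
    rcases hinit0 with h | h <;> rw [h] <;> norm_num
  -- pointwise values of the various pairings involving `Z`
  have hBXZ : ∀ t, B (X t) (Z t) = -(c t * a t) * a t := by
    intro t; rw [hcircle t]; simp [ha_def, hc_def]
  have hBZY : ∀ t, B (Z t) (Y t) = -(c t * a t) * b t := by
    intro t; rw [hcircle t]
    simp only [map_smul, LinearMap.smul_apply, smul_eq_mul, map_neg, LinearMap.neg_apply]
    rfl
  have hBYZ : ∀ t, B (Y t) (Z t) = -(c t * a t) * b t := by
    intro t; rw [hsymm]; exact hBZY t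
  -- the scalar ODE system
  have ha' : ∀ t, HasDerivAt a (2 * b t) t := by
    intro t
    have h := hXX t
    rw [hsymm (Y t) (X t)] at h
    convert h using 1
    simp only [hb_def]; ring
  have hb' : ∀ t, HasDerivAt b (c t * (1 - a t ^ 2)) t := by
    intro t
    have h := hXY t
    rw [hBXZ t] at h
    convert h using 1
    simp only [hc_def, ha_def]; ring
  have hc' : ∀ t, HasDerivAt c (-2 * (c t * a t) * b t) t := by
    intro t
    have h := hYY t
    rw [hBZY t, hBYZ t] at h
    convert h using 1
    ring
  -- Grönwall function
  set D : ℝ → ℝ := fun t => b t ^ 2 + (a t - a0) ^ 2 with hD_def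
  set D' : ℝ → ℝ := fun t => 2 * b t * (c t * (1 - a t ^ 2)) + 2 * (a t - a0) * (2 * b t)
    with hD'_def
  have hD : ∀ t, HasDerivAt D (D' t) t := by
    intro t
    have h1 : HasDerivAt (fun s => b s ^ 2) (2 * b t * (c t * (1 - a t ^ 2))) t := by
      have := (hb' t).fun_pow 2
      exact this.congr_deriv (by ring)
    have h2 : HasDerivAt (fun s => (a s - a0) ^ 2) (2 * (a t - a0) * (2 * b t)) t := by
      have := ((ha' t).sub_const a0).fun_pow 2
      exact this.congr_deriv (by ring)
    exact h1.add h2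
  have hD0 : D 0 = 0 := by
    simp only [hD_def]
    rw [show b 0 = 0 from hinit1, show a 0 - a0 = 0 by rw [ha0_def]; ring]
    ring
  have hDnn : ∀ t, 0 ≤ D t := fun t => by positivity
  have hkey : ∀ t, D' t = 2 * b t * (a t - a0) * (2 - c t * (a t + a0)) := by
    intro t
    simp only [hD'_def]
    linear_combination (-(2 * b t * c t)) * ha0sq
  have hDzero : ∀ t, D t = 0 := by
    refine gronwall_zero_all hD hD0 (fun T => ?_)
    have hacont : Continuous a := continuous_iff_continuousAt.2 fun t => (ha' t).continuousAt
    have hccont : Continuous c := continuous_iff_continuousAt.2 fun t => (hc' t).continuousAt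
    have hmcont : ContinuousOn (fun t => |2 - c t * (a t + a0)|) (Icc (-T) T) :=
      ((continuous_const.sub (hccont.mul (hacont.add continuous_const))).abs).continuousOn
    obtain ⟨C, hC⟩ := isCompact_Icc.exists_bound_of_continuousOn hmcont
    refine ⟨C, fun t ht => ?_⟩
    have htmem : t ∈ Icc (-T) T := by
      rw [abs_le] at ht; exact ⟨ht.1, ht.2⟩
    have hCt : |2 - c t * (a t + a0)| ≤ C := by
      have := hC t htmem
      rwa [Real.norm_eq_abs, abs_abs] at this
    have hDt : D t = b t ^ 2 + (a t - a0) ^ 2 := rfl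
    have h1 : |2 * b t * (a t - a0)| ≤ D t := by
      rw [abs_le]
      constructor
      · nlinarith [sq_nonneg (b t + (a t - a0))]
      · nlinarith [sq_nonneg (b t - (a t - a0))]
    calc |D' t| = |2 * b t * (a t - a0)| * |2 - c t * (a t + a0)| := by
          rw [hkey t, abs_mul]
      _ ≤ D t * C := mul_le_mul h1 hCt (abs_nonneg _) (hDnn t)
      _ = C * |D t| := by rw [abs_of_nonneg (hDnn t)]; ring
  have hbzero : ∀ t, b t = 0 := by
    intro t
    have h : b t ^ 2 + (a t - a0) ^ 2 = 0 := hDzero t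
    have h1 : b t ^ 2 = 0 := by nlinarith [sq_nonneg (a t - a0), sq_nonneg (b t)]
    exact pow_eq_zero_iff two_ne_zero |>.1 h1
  have hazero : ∀ t, a t = a0 := by
    intro t
    have h : b t ^ 2 + (a t - a0) ^ 2 = 0 := hDzero t
    have h1 : (a t - a0) ^ 2 = 0 := by nlinarith [sq_nonneg (a t - a0), sq_nonneg (b t)]
    have h2 := pow_eq_zero_iff two_ne_zero |>.1 h1
    linarith
  have hcconst : ∀ t, c t = c 0 := by
    intro t
    exact is_const_of_deriv_eq_zero (fun s => (hc' s).differentiableAt)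
      (fun s => by rw [(hc' s).deriv, hbzero s]; ring) t 0
  exact ⟨hazero, hbzero, hcconst⟩
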